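/- For each 1 ≤ k ≤ D let ∂_k be the unique ℂ-linear derivation of the free algebra F with ∂_k(A_i) = δ_{ki}·1, ∂_k(φ_j) = 0 and ∂_k(ψ^α) = 0. Then ∂_k(r_m) = 0, ∂_k(r'_j) = 0 and ∂_k(r''_α) = 0 for all indices m, j, α. Consequently each ∂_k maps the two-sided ideal generated by the Yang–Mills relation elements into itself and induces a derivation ∂_k of YM_0 satisfying ∂_k(A_i) = δ_{ki}·1, ∂_k(φ_j) = 0, ∂_k(ψ^α) = 0 on the images of the generators; moreover the induced derivations ∂_1, …, ∂_D of YM_0 pairwise commute. -/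

import Mathlib

open scoped BigOperators

noncomputable section

/-- Generators of the free algebra: `A_1, …, A_D`, `φ_1, …, φ_{d'}`, `ψ^1, …, ψ^N`. -/
abbrev YMVar (D d' N : ℕ) := Fin D ⊕ (Fin d' ⊕ Fin N)

/-- The free unital associative ℂ-algebra on the Yang–Mills generators. -/
abbrev YMFree (D d' N : ℕ) := FreeAlgebra ℂ (YMVar D d' N)

variable {D d' N : ℕ}

/-- The generator `A_i`. -/
def ymA (i : Fin D) : YMFree D d' N := FreeAlgebra.ι ℂ (Sum.inl i)

/-- The generator `φ_j`. -/
def ymPhi (j : Fin d') : YMFree D d' N := FreeAlgebra.ι ℂ (Sum.inr (Sum.inl j))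

/-- The generator `ψ^α`. -/
def ymPsi (α : Fin N) : YMFree D d' N := FreeAlgebra.ι ℂ (Sum.inr (Sum.inr α))

/-- Commutator `[a,b] = ab - ba`. -/
def ymBr (a b : YMFree D d' N) : YMFree D d' N := a * b - b * a

/-- The subalgebra of `YMFree` generated by the matter generators `φ_j, ψ^α`. -/
def ymMatter (D d' N : ℕ) : Subalgebra ℂ (YMFree D d' N) :=
  Algebra.adjoin ℂ
    (Set.range fun y : Fin d' ⊕ Fin N => (FreeAlgebra.ι ℂ (Sum.inr y) : YMFree D d' N))

/-- The Yang–Mills relation element `r_m`. -/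
def ymR (Γ : Fin D → Matrix (Fin N) (Fin N) ℂ) (m : Fin D) : YMFree D d' N :=
  (∑ i, ymBr (ymA i) (ymBr (ymA i) (ymA m)))
    + (∑ j, ymBr (ymPhi j) (ymBr (ymPhi j) (ymA m)))
    - (1 / 2 : ℂ) • ∑ α, ∑ β, Γ m α β • (ymPsi α * ymPsi β + ymPsi β * ymPsi α)

/-- The Yang–Mills relation element `r'_j`. -/
def ymR' (u : Fin d' → YMFree D d' N) (j : Fin d') : YMFree D d' N :=
  (∑ i, ymBr (ymA i) (ymBr (ymA i) (ymPhi j))) + u j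

/-- The Yang–Mills relation element `r''_α`. -/
def ymR'' (Γ : Fin D → Matrix (Fin N) (Fin N) ℂ) (v : Fin N → YMFree D d' N)
    (α : Fin N) : YMFree D d' N :=
  (∑ i, ∑ β, Γ i α β • ymBr (ymA i) (ymPsi β)) + v α

/-- The relation identifying all Yang–Mills relation elements with `0`. -/
def ymRel (Γ : Fin D → Matrix (Fin N) (Fin N) ℂ) (u : Fin d' → YMFree D d' N)
    (v : Fin N → YMFree D d' N) : YMFree D d' N → YMFree D d' N → Prop :=
  fun a b => ((∃ m, a = ymR Γ m) ∨ (∃ j, a = ymR' u j) ∨ (∃ α, a = ymR'' Γ v α)) ∧ b = 0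

/-- The Yang–Mills algebra `YM₀`: the quotient of the free algebra by the two-sided ideal
generated by the Yang–Mills relation elements. -/
abbrev YMQuot (Γ : Fin D → Matrix (Fin N) (Fin N) ℂ) (u : Fin d' → YMFree D d' N)
    (v : Fin N → YMFree D d' N) := RingQuot (ymRel Γ u v)

/-- The quotient map `F → YM₀`. -/
def ymPi (Γ : Fin D → Matrix (Fin N) (Fin N) ℂ) (u : Fin d' → YMFree D d' N)
    (v : Fin N → YMFree D d' N) : YMFree D d' N →ₐ[ℂ] YMQuot Γ u v :=
  RingQuot.mkAlgHom ℂ (ymRel Γ u v)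

end

section AuxLemmas

variable {D d' N : ℕ}

lemma ymDer_one (d : YMFree D d' N →ₗ[ℂ] YMFree D d' N)
    (h : ∀ x y, d (x * y) = d x * y + x * d y) : d 1 = 0 := by
  have h1 := h 1 1
  simp only [mul_one, one_mul] at h1
  exact (left_eq_add.mp h1)

lemma ymDer_zero_of_gen (d : YMFree D d' N →ₗ[ℂ] YMFree D d' N)
    (h : ∀ x y, d (x * y) = d x * y + x * d y)
    (hgen : ∀ x : YMVar D d' N, d (FreeAlgebra.ι ℂ x) = 0) : ∀ a, d a = 0 := by
  intro a
  induction a using FreeAlgebra.induction with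
  | grade0 r =>
      rw [Algebra.algebraMap_eq_smul_one, map_smul, ymDer_one d h, smul_zero]
  | grade1 x => exact hgen x
  | mul a b ha hb => rw [h, ha, hb, zero_mul, mul_zero, add_zero]
  | add a b ha hb => rw [map_add, ha, hb, add_zero]

lemma ymDer_matter (d : YMFree D d' N →ₗ[ℂ] YMFree D d' N)
    (h : ∀ x y, d (x * y) = d x * y + x * d y)
    (hφ : ∀ j, d (ymPhi j) = 0) (hψ : ∀ α, d (ymPsi α) = 0)
    {x : YMFree D d' N} (hx : x ∈ ymMatter D d' N) : d x = 0 := by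
  induction hx using Algebra.adjoin_induction with
  | mem y hy =>
      obtain ⟨y, rfl⟩ := hy
      cases y with
      | inl j => exact hφ j
      | inr α => exact hψ α
  | algebraMap r =>
      rw [Algebra.algebraMap_eq_smul_one, map_smul, ymDer_one d h, smul_zero]
  | add a b _ _ ha hb => rw [map_add, ha, hb, add_zero]
  | mul a b _ _ ha hb => rw [h, ha, hb, zero_mul, mul_zero, add_zero]

lemma ymBr_ite_left (p : Prop) [Decidable p] (x : YMFree D d' N) :
    ymBr (if p then (1 : YMFree D d' N) else 0) x = 0 := by
  split_ifs <;> simp [ymBr]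

lemma ymBr_ite_right (p : Prop) [Decidable p] (x : YMFree D d' N) :
    ymBr x (if p then (1 : YMFree D d' N) else 0) = 0 := by
  split_ifs <;> simp [ymBr]

lemma ymBr_zero_left (x : YMFree D d' N) : ymBr 0 x = 0 := by simp [ymBr]

lemma ymBr_zero_right (x : YMFree D d' N) : ymBr x 0 = 0 := by simp [ymBr]

end AuxLemmas


/-- the free-algebra derivations `∂_k` with `∂_k(A_i) = δ_{ki}`,
`∂_k(φ_j) = ∂_k(ψ^α) = 0` kill all Yang–Mills relation elements, map the two-sided ideal
they generate into itself (equivalently preserve the kernel of the quotient map), and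
hence induce pairwise commuting derivations of `YM₀` with the stated values on the images
of the generators. -/
theorem statement8
    (D d' N : ℕ) (Γ : Fin D → Matrix (Fin N) (Fin N) ℂ)
    (u : Fin d' → YMFree D d' N) (v : Fin N → YMFree D d' N)
    (hu : ∀ j, u j ∈ ymMatter D d' N) (hv : ∀ α, v α ∈ ymMatter D d' N)
    (der : Fin D → (YMFree D d' N →ₗ[ℂ] YMFree D d' N))
    (hleib : ∀ (k : Fin D) (x y : YMFree D d' N),
      der k (x * y) = der k x * y + x * der k y)
    (hA : ∀ k i : Fin D, der k (ymA i) = if k = i then 1 else 0)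
    (hphi : ∀ (k : Fin D) (j : Fin d'), der k (ymPhi j) = 0)
    (hpsi : ∀ (k : Fin D) (α : Fin N), der k (ymPsi α) = 0) :
    (∀ k m : Fin D, der k (ymR Γ m) = 0) ∧
    (∀ (k : Fin D) (j : Fin d'), der k (ymR' u j) = 0) ∧
    (∀ (k : Fin D) (α : Fin N), der k (ymR'' Γ v α) = 0) ∧
    (∀ (k : Fin D) (z : YMFree D d' N),
      ymPi Γ u v z = 0 → ymPi Γ u v (der k z) = 0) ∧
    (∃ δ : Fin D → (YMQuot Γ u v →ₗ[ℂ] YMQuot Γ u v),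
      (∀ (k : Fin D) (x y : YMQuot Γ u v), δ k (x * y) = δ k x * y + x * δ k y) ∧
      (∀ (k : Fin D) (z : YMFree D d' N), δ k (ymPi Γ u v z) = ymPi Γ u v (der k z)) ∧
      (∀ k i : Fin D, δ k (ymPi Γ u v (ymA i)) = if k = i then 1 else 0) ∧
      (∀ (k : Fin D) (j : Fin d'), δ k (ymPi Γ u v (ymPhi j)) = 0) ∧
      (∀ (k : Fin D) (α : Fin N), δ k (ymPi Γ u v (ymPsi α)) = 0) ∧
      (∀ k l : Fin D, (δ k).comp (δ l) = (δ l).comp (δ k))) := by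
  classical
  have hbr : ∀ (k : Fin D) (a b : YMFree D d' N),
      der k (ymBr a b) = ymBr (der k a) b + ymBr a (der k b) := by
    intro k a b
    simp only [ymBr, map_sub, hleib k]
    abel
  have hone : ∀ k : Fin D, der k (1 : YMFree D d' N) = 0 :=
    fun k => ymDer_one (der k) (hleib k)
  have hite : ∀ (k : Fin D) (p : Prop) [Decidable p],
      der k (if p then (1 : YMFree D d' N) else 0) = 0 := by
    intro k p _
    split_ifs
    · exact hone k
    · exact map_zero _
  have hR : ∀ k m : Fin D, der k (ymR Γ m) = 0 := by
    intro k m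
    simp only [ymR, map_sub, map_add, map_sum, map_smul, hbr, hA, hphi, hpsi, hleib,
      ymBr_ite_left, ymBr_ite_right, ymBr_zero_left, ymBr_zero_right, add_zero, zero_add,
      mul_zero, zero_mul, smul_zero, Finset.sum_const_zero, sub_zero, sub_self]
  have hR' : ∀ (k : Fin D) (j : Fin d'), der k (ymR' u j) = 0 := by
    intro k j
    have hmu : der k (u j) = 0 :=
      ymDer_matter (der k) (hleib k) (hphi k) (hpsi k) (hu j)
    simp only [ymR', map_add, map_sum, hbr, hA, hphi, hmu, ymBr_ite_left, ymBr_ite_right,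
      ymBr_zero_left, ymBr_zero_right, add_zero, zero_add, Finset.sum_const_zero]
  have hR'' : ∀ (k : Fin D) (α : Fin N), der k (ymR'' Γ v α) = 0 := by
    intro k α
    have hmv : der k (v α) = 0 :=
      ymDer_matter (der k) (hleib k) (hphi k) (hpsi k) (hv α)
    simp only [ymR'', map_add, map_sum, map_smul, hbr, hA, hpsi, hmv, ymBr_ite_left,
      ymBr_ite_right, ymBr_zero_left, ymBr_zero_right, add_zero, zero_add, smul_zero,
      Finset.sum_const_zero]
  have hπ : ymPi Γ u v = RingQuot.mkAlgHom ℂ (ymRel Γ u v) := rfl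
  have hπrel : ∀ x : YMFree D d' N,
      ((∃ m, x = ymR Γ m) ∨ (∃ j, x = ymR' u j) ∨ (∃ α, x = ymR'' Γ v α)) →
      ymPi Γ u v x = 0 := by
    intro x hx
    have := RingQuot.mkAlgHom_rel ℂ (s := ymRel Γ u v) (x := x) (y := 0) ⟨hx, rfl⟩
    rw [hπ, this, map_zero]
  have hdrel : ∀ (k : Fin D) (x : YMFree D d' N),
      ((∃ m, x = ymR Γ m) ∨ (∃ j, x = ymR' u j) ∨ (∃ α, x = ymR'' Γ v α)) →
      der k x = 0 := by
    rintro k x (⟨m, rfl⟩ | ⟨j, rfl⟩ | ⟨α, rfl⟩)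
    · exact hR k m
    · exact hR' k j
    · exact hR'' k α
  -- construct the lifted algebra maps into the trivial square-zero extension
  have key : ∀ k : Fin D,
      ∃ g : YMQuot Γ u v →ₐ[ℂ] TrivSqZeroExt (YMQuot Γ u v) (YMQuot Γ u v),
        ∀ z : YMFree D d' N,
          g (ymPi Γ u v z) = ⟨ymPi Γ u v z, ymPi Γ u v (der k z)⟩ := by
    intro k
    let L : YMFree D d' N →ₗ[ℂ] TrivSqZeroExt (YMQuot Γ u v) (YMQuot Γ u v) :=
      { toFun := fun x => ⟨ymPi Γ u v x, ymPi Γ u v (der k x)⟩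
        map_add' := by
          intro x y
          apply TrivSqZeroExt.ext <;>
            simp [TrivSqZeroExt.fst_add, TrivSqZeroExt.snd_add, map_add] <;> rfl
        map_smul' := by
          intro c x
          apply TrivSqZeroExt.ext <;>
            simp [TrivSqZeroExt.fst_smul, TrivSqZeroExt.snd_smul, map_smul] <;> rfl }
    have hL : ∀ x : YMFree D d' N, L x = ⟨ymPi Γ u v x, ymPi Γ u v (der k x)⟩ := fun _ => rfl
    let Φ : YMFree D d' N →ₐ[ℂ] TrivSqZeroExt (YMQuot Γ u v) (YMQuot Γ u v) :=
      AlgHom.ofLinearMap L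
        (by
          apply TrivSqZeroExt.ext
          · simp [hL, map_one]
          · simp [hL, hone k])
        (by
          intro x y
          apply TrivSqZeroExt.ext
          · simp [hL, map_mul]; rfl
          · simp only [hL, TrivSqZeroExt.snd_mul, TrivSqZeroExt.fst_mul, hleib k, map_add,
              map_mul, MulOpposite.smul_eq_mul_unop, smul_eq_mul, MulOpposite.unop_op]
            exact add_comm _ _)
    have hΦ : ∀ x : YMFree D d' N, Φ x = ⟨ymPi Γ u v x, ymPi Γ u v (der k x)⟩ := fun _ => rfl
    have hker : ∀ x y : YMFree D d' N, ymRel Γ u v x y → Φ x = Φ y := by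
      rintro x y ⟨hx, rfl⟩
      rw [hΦ, hΦ, hπrel x hx, hdrel k x hx]
      simp; rfl
    refine ⟨RingQuot.liftAlgHom ℂ ⟨Φ, hker⟩, fun z => ?_⟩
    rw [hπ, RingQuot.liftAlgHom_mkAlgHom_apply]
    exact hΦ z
  choose g hg using key
  have hsurj : Function.Surjective (ymPi Γ u v) := by
    rw [hπ]; exact RingQuot.mkAlgHom_surjective ℂ _
  have hfst : ∀ (k : Fin D) (x : YMQuot Γ u v), (g k x).fst = x := by
    intro k x
    obtain ⟨z, rfl⟩ := hsurj x
    rw [hg k z]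
    rfl
  -- the induced derivations
  let δ : Fin D → (YMQuot Γ u v →ₗ[ℂ] YMQuot Γ u v) := fun k =>
    { toFun := fun x => (g k x).snd
      map_add' := by
        intro x y
        show (g k (x + y)).snd = (g k x).snd + (g k y).snd
        rw [map_add, TrivSqZeroExt.snd_add]
      map_smul' := by
        intro c x
        show (g k (c • x)).snd = c • (g k x).snd
        rw [map_smul, TrivSqZeroExt.snd_smul] }
  have hδπ : ∀ (k : Fin D) (z : YMFree D d' N),
      δ k (ymPi Γ u v z) = ymPi Γ u v (der k z) := by
    intro k z
    show (g k (ymPi Γ u v z)).snd = _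
    rw [hg k z]
    rfl
  have hδleib : ∀ (k : Fin D) (x y : YMQuot Γ u v),
      δ k (x * y) = δ k x * y + x * δ k y := by
    intro k x y
    show (g k (x * y)).snd = (g k x).snd * y + x * (g k y).snd
    rw [map_mul, TrivSqZeroExt.snd_mul]
    simp only [MulOpposite.smul_eq_mul_unop, smul_eq_mul, MulOpposite.unop_op, hfst]
    exact add_comm _ _
  -- commutators of the free derivations vanish
  have hcomm_free : ∀ (k l : Fin D) (z : YMFree D d' N),
      der k (der l z) = der l (der k z) := by
    intro k l
    set c : YMFree D d' N →ₗ[ℂ] YMFree D d' N := (der k) ∘ₗ (der l) - (der l) ∘ₗ (der k)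
      with hc
    have hcl : ∀ x y, c (x * y) = c x * y + x * c y := by
      intro x y
      simp only [hc, LinearMap.sub_apply, LinearMap.comp_apply, hleib, map_add, sub_mul, mul_sub]
      abel
    have hgen : ∀ x : YMVar D d' N, c (FreeAlgebra.ι ℂ x) = 0 := by
      intro x
      rcases x with i | j | α
      · show c (ymA i) = 0
        simp only [hc, LinearMap.sub_apply, LinearMap.comp_apply, hA, hite, sub_zero]
      · show c (ymPhi j) = 0
        simp only [hc, LinearMap.sub_apply, LinearMap.comp_apply, hphi, map_zero, sub_zero]
      · show c (ymPsi α) = 0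
        simp only [hc, LinearMap.sub_apply, LinearMap.comp_apply, hpsi, map_zero, sub_zero]
    intro z
    have := ymDer_zero_of_gen c hcl hgen z
    simp only [hc, LinearMap.sub_apply, LinearMap.comp_apply, sub_eq_zero] at this
    exact this
  refine ⟨hR, hR', hR'', ?_, δ, hδleib, hδπ, ?_, ?_, ?_, ?_⟩
  · intro k z hz
    have := hδπ k z
    rw [hz, map_zero] at this
    exact this.symm
  · intro k i
    rw [hδπ k (ymA i), hA]
    split_ifs <;> simp
  · intro k j
    rw [hδπ k (ymPhi j), hphi, map_zero]
  · intro k α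
    rw [hδπ k (ymPsi α), hpsi, map_zero]
  · intro k l
    apply LinearMap.ext
    intro x
    obtain ⟨z, rfl⟩ := hsurj x
    simp only [LinearMap.comp_apply, hδπ, hcomm_free k l z]
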